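/- arXiv:2202.05550 — 9 statements merged into one kernel-verified Lean document; each statement's English description precedes it below -/
import Mathlib

section
/- A factorial basis B = ⟨P_k(x)⟩_{k=0}^∞ of K[x] is (A,B)-compatible with a K-linear operator L : K[x] → K[x] if and only if both of the following hold: (C1) deg L P_k(x) ≤ k + B for all k ≥ 0, and (C2) P_{k−A}(x) divides L P_k(x) in K[x] for all k ≥ A. -/
open Polynomial Finset

/-- A *factorial basis* of `K[x]`: `deg P_k = k` and `P_k ∣ P_{k+1}` for all `k`. -/
def IsFactorialBasis (K : Type*) [Field K] (P : ℕ → Polynomial K) : Prop :=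
  ∀ k : ℕ, (P k).degree = (k : ℕ) ∧ P k ∣ P (k + 1)

/-- Extension of a sequence of polynomials to integer indices, zero for negative indices. -/
noncomputable def zext {K : Type*} [Field K] (P : ℕ → Polynomial K) : ℤ → Polynomial K :=
  fun j => if 0 ≤ j then P j.toNat else 0

/-- `(A,B)`-compatibility of a basis `P` with an operator `L`:
`L P_k = ∑_{i=-A}^{B} α_{k,i} P_{k+i}` (with `P_j = 0` for `j < 0`). -/
def IsCompatible {K : Type*} [Field K] (P : ℕ → Polynomial K)
    (L : Polynomial K → Polynomial K) (A B : ℕ) : Prop :=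
  ∀ k : ℕ, ∃ α : ℤ → K,
    L (P k) = ∑ i ∈ Finset.Icc (-(A : ℤ)) (B : ℤ), α i • zext P ((k : ℤ) + i)

section Aux

variable {K : Type*} [Field K] {P : ℕ → Polynomial K}

lemma fb_ne_zero (hP : IsFactorialBasis K P) (k : ℕ) : P k ≠ 0 := by
  intro h
  have h1 := (hP k).1
  rw [h, degree_zero] at h1
  exact (by simp : (⊥ : WithBot ℕ) ≠ (k : ℕ)) h1

lemma fb_natDegree (hP : IsFactorialBasis K P) (k : ℕ) : (P k).natDegree = k :=
  natDegree_eq_of_degree_eq_some (hP k).1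

lemma fb_dvd (hP : IsFactorialBasis K P) {m n : ℕ} (h : m ≤ n) : P m ∣ P n := by
  induction n, h using Nat.le_induction with
  | base => exact dvd_rfl
  | succ n hmn ih => exact ih.trans (hP n).2

lemma fb_repr (hP : IsFactorialBasis K P) :
    ∀ n : ℕ, ∀ m ≤ n, ∀ Q : Polynomial K, P m ∣ Q → Q.degree ≤ (n : ℕ) →
      ∃ c : ℕ → K, Q = ∑ j ∈ Icc m n, c j • P j := by
  intro n
  induction n with
  | zero =>
    intro m hm Q hdvd hdeg
    interval_cases m
    refine ⟨fun _ => Q.coeff 0 / (P 0).coeff 0, ?_⟩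
    simp only [Icc_self, sum_singleton]
    have h0 : P 0 = C ((P 0).coeff 0) := eq_C_of_degree_le_zero (le_of_eq (hP 0).1)
    have hQ : Q = C (Q.coeff 0) := eq_C_of_degree_le_zero (by exact_mod_cast hdeg)
    have hne : (P 0).coeff 0 ≠ 0 := by
      intro h; apply fb_ne_zero hP 0; rw [h0, h, map_zero]
    rw [smul_eq_C_mul]
    conv_lhs => rw [hQ]
    conv_rhs => rw [h0]
    rw [← map_mul]
    congr 1
    field_simp
    rw [coeff_C_zero, mul_div_assoc, div_self hne, mul_one]
  | succ n ih =>
    intro m hm Q hdvd hdeg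
    set d : K := Q.coeff (n + 1) / (P (n + 1)).leadingCoeff with hd
    set Q' : Polynomial K := Q - d • P (n + 1) with hQ'
    have hlc : (P (n + 1)).leadingCoeff ≠ 0 := leadingCoeff_ne_zero.mpr (fb_ne_zero hP _)
    have hcoeff : (P (n + 1)).coeff (n + 1) = (P (n + 1)).leadingCoeff := by
      rw [leadingCoeff, fb_natDegree hP]
    have hQ'deg : Q'.degree ≤ (n : ℕ) := by
      rw [degree_le_iff_coeff_zero]
      intro i hi
      have hi' : n < i := by exact_mod_cast hi
      rw [hQ', coeff_sub, coeff_smul]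
      rcases eq_or_lt_of_le (Nat.succ_le_of_lt hi') with h | h
      · rw [← h, hcoeff, hd, smul_eq_mul, div_mul_cancel₀ _ hlc, sub_self]
      · have h1 : Q.coeff i = 0 :=
          coeff_eq_zero_of_degree_lt (lt_of_le_of_lt hdeg (by exact_mod_cast h))
        have h2 : (P (n + 1)).coeff i = 0 :=
          coeff_eq_zero_of_degree_lt (by rw [(hP (n + 1)).1]; exact_mod_cast h)
        rw [h1, h2, smul_zero, sub_self]
    have hdvdsmul : P m ∣ d • P (n + 1) := by
      rw [smul_eq_C_mul]
      exact Dvd.dvd.mul_left (fb_dvd hP hm) _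
    by_cases hmn : m ≤ n
    · obtain ⟨c, hc⟩ := ih m hmn Q' (dvd_sub hdvd hdvdsmul) hQ'deg
      refine ⟨fun j => if j = n + 1 then d else c j, ?_⟩
      rw [Finset.sum_Icc_succ_top hm]
      beta_reduce
      rw [if_pos rfl]
      have heq : ∑ j ∈ Icc m n, (if j = n + 1 then d else c j) • P j
          = ∑ j ∈ Icc m n, c j • P j := by
        refine Finset.sum_congr rfl fun j hj => ?_
        have := (mem_Icc.mp hj).2
        rw [if_neg (by omega)]
      rw [heq, ← hc, hQ', sub_add_cancel]
    · have hm' : m = n + 1 := by omega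
      subst hm'
      have h0 : Q' = 0 := by
        by_contra h
        have hdd : P (n + 1) ∣ Q' := dvd_sub hdvd hdvdsmul
        have := degree_le_of_dvd hdd h
        rw [(hP (n + 1)).1] at this
        have := this.trans hQ'deg
        exact absurd (by exact_mod_cast this) (by omega)
      refine ⟨fun _ => d, ?_⟩
      simp only [Icc_self, sum_singleton]
      have : Q = d • P (n + 1) := by
        have := sub_eq_zero.mp h0
        exact this
      exact this

end Aux

/-- A factorial basis `P` is `(A,B)`-compatible with a `K`-linear operator `L` iff
(C1) `deg (L P_k) ≤ k + B` for all `k`, and (C2) `P_{k-A} ∣ L P_k` for all `k ≥ A`. -/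
theorem isCompatible_iff {K : Type*} [Field K] (P : ℕ → Polynomial K)
    (hP : IsFactorialBasis K P) (L : Polynomial K →ₗ[K] Polynomial K) (A B : ℕ) :
    IsCompatible P (⇑L) A B ↔
      ((∀ k : ℕ, (L (P k)).degree ≤ ((k + B : ℕ) : ℕ)) ∧
       (∀ k : ℕ, A ≤ k → P (k - A) ∣ L (P k))) := by
  constructor
  · intro h
    constructor
    · intro k
      obtain ⟨α, hα⟩ := h k
      rw [hα]
      refine (degree_sum_le _ _).trans (Finset.sup_le fun i hi => ?_)
      refine (degree_smul_le _ _).trans ?_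
      obtain ⟨hi1, hi2⟩ := mem_Icc.mp hi
      unfold zext
      split_ifs with h0
      · rw [(hP _).1]
        exact_mod_cast Nat.cast_le.mpr (by omega : ((k : ℤ) + i).toNat ≤ k + B)
      · simp
    · intro k hk
      obtain ⟨α, hα⟩ := h k
      rw [hα]
      refine dvd_sum fun i hi => ?_
      rw [smul_eq_C_mul]
      refine Dvd.dvd.mul_left ?_ _
      obtain ⟨hi1, hi2⟩ := mem_Icc.mp hi
      have h0 : 0 ≤ (k : ℤ) + i := by omega
      unfold zext
      rw [if_pos h0]
      exact fb_dvd hP (by omega : k - A ≤ ((k : ℤ) + i).toNat)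
  · rintro ⟨h1, h2⟩ k
    set m : ℕ := k - A with hm
    have hmle : m ≤ k + B := le_trans (Nat.sub_le k A) (Nat.le_add_right k B)
    have hdvd : P m ∣ L (P k) := by
      rcases le_or_gt A k with h | h
      · exact h2 k h
      · have hm0 : m = 0 := by omega
        rw [hm0]
        have hu : IsUnit (P 0) := isUnit_iff_degree_eq_zero.mpr (by exact_mod_cast (hP 0).1)
        exact hu.dvd
    obtain ⟨c, hc⟩ := fb_repr hP (k + B) m hmle (L (P k)) hdvd (h1 k)
    refine ⟨fun i => if 0 ≤ (k : ℤ) + i ∧ ((k : ℤ) + i).toNat ∈ Icc m (k + B)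
      then c (((k : ℤ) + i).toNat) else 0, ?_⟩
    rw [hc]
    have hsub : Finset.image (fun j : ℕ => (j : ℤ) - k) (Icc m (k + B))
        ⊆ Icc (-(A : ℤ)) (B : ℤ) := by
      intro i hi
      obtain ⟨j, hj, rfl⟩ := Finset.mem_image.mp hi
      obtain ⟨hj1, hj2⟩ := mem_Icc.mp hj
      rw [mem_Icc]
      omega
    rw [← Finset.sum_subset hsub (fun i hi hni => ?_)]
    · rw [Finset.sum_image (fun x _ y _ h => by omega)]
      refine Finset.sum_congr rfl fun j hj => ?_
      have hj' := mem_Icc.mp hj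
      have he : (k : ℤ) + ((j : ℤ) - k) = (j : ℤ) := by ring
      beta_reduce
      rw [he, Int.toNat_natCast, if_pos ⟨by omega, hj⟩]
      unfold zext
      rw [if_pos (by omega : (0:ℤ) ≤ (j:ℤ)), Int.toNat_natCast]
    · beta_reduce
      rw [if_neg, zero_smul]
      rintro ⟨hpos, hmem⟩
      apply hni
      refine Finset.mem_image.mpr ⟨((k : ℤ) + i).toNat, hmem, by omega⟩
end

section
/- A factorial basis B of K[x] with root sequence ρ = ⟨ρ_1, ρ_2, ρ_3, …⟩ is (A,0)-compatible with the shift operator E if and only if for all k ∈ ℕ the multiset inclusion [ρ_1 + 1, ρ_2 + 1, …, ρ_k + 1] ⊆ [ρ_1, ρ_2, …, ρ_{k+A}] holds. -/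
open Polynomial Finset

section Aux
variable {K : Type*} [Field K]

lemma aux_prod_eq (ρ : ℕ → K) (k : ℕ) :
    ∏ j ∈ Finset.range k, (X - C (ρ j)) =
      (((Finset.range k).val.map ρ).map (fun a => X - C a)).prod := by
  rw [Multiset.map_map, Finset.prod_eq_multiset_prod]
  rfl

lemma aux_monic (s : Multiset K) : (s.map (fun a => X - C a)).prod.Monic :=
  monic_multiset_prod_of_monic s _ (fun a _ => monic_X_sub_C a)

lemma aux_dvd_iff (s t : Multiset K) :
    (s.map (fun a => X - C a)).prod ∣ (t.map (fun a => X - C a)).prod ↔ s ≤ t := by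
  constructor
  · intro h
    have := roots.le_of_dvd (aux_monic (K := K) t).ne_zero h
    rwa [roots_multiset_prod_X_sub_C, roots_multiset_prod_X_sub_C] at this
  · intro h
    exact Multiset.prod_dvd_prod_of_le (Multiset.map_le_map h)

lemma aux_natDegree (s : Multiset K) :
    (s.map (fun a => X - C a)).prod.natDegree = Multiset.card s := by
  rw [natDegree_multiset_prod_of_monic _ (fun f hf => by
    obtain ⟨b, _, rfl⟩ := Multiset.mem_map.mp hf; exact monic_X_sub_C b)]
  simp [Multiset.map_map, Function.comp]

end Aux

section Basis
variable {K : Type*} [Field K] {P : ℕ → Polynomial K} {ρ c : ℕ → K}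
variable (hc : ∀ k, c k ≠ 0)
variable (hP : ∀ k : ℕ, P k = Polynomial.C (c k) *
      ∏ j ∈ Finset.range k, (X - Polynomial.C (ρ j)))
include hc hP

lemma aux_Pdeg (k : ℕ) : (P k).natDegree = k := by
  rw [hP k, natDegree_C_mul (hc k), aux_prod_eq, aux_natDegree]
  simp

lemma aux_Pne (k : ℕ) : P k ≠ 0 := by
  rw [hP k]
  exact mul_ne_zero (by simpa using hc k) (by rw [aux_prod_eq]; exact (aux_monic _).ne_zero)

lemma aux_Pcoeff (k : ℕ) : (P k).coeff k = c k := by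
  have hd := aux_Pdeg hc hP k
  have : (P k).coeff k = (P k).leadingCoeff := by rw [leadingCoeff, hd]
  rw [this, hP k, leadingCoeff_mul, leadingCoeff_C, aux_prod_eq,
    (aux_monic _).leadingCoeff, mul_one]

lemma aux_Pdvd {m k : ℕ} (hmk : m ≤ k) : P m ∣ P k := by
  refine ⟨C (c k) * C (c m)⁻¹ * ∏ j ∈ Finset.Ico m k, (X - C (ρ j)), ?_⟩
  have h1 : C (c m) * C (c m)⁻¹ = (1 : Polynomial K) := by
    rw [← C_mul, mul_inv_cancel₀ (hc m), map_one]
  rw [hP k, hP m, ← Finset.prod_range_mul_prod_Ico _ hmk]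
  linear_combination (-(C (c k)) * (∏ j ∈ Finset.range m, (X - C (ρ j))) *
    (∏ j ∈ Finset.Ico m k, (X - C (ρ j)))) * h1

lemma aux_Pshift (k : ℕ) :
    (taylor (1 : K)) (P k) = C (c k) * ∏ j ∈ Finset.range k, (X - C (ρ j - 1)) := by
  rw [hP k, taylor_apply, mul_comp, C_comp, Polynomial.prod_comp]
  congr 1
  refine Finset.prod_congr rfl fun j _ => ?_
  rw [sub_comp, X_comp, C_comp, C_sub, C_1]
  ring

lemma aux_rep :
    ∀ (n m : ℕ) (f : Polynomial K), P m ∣ f → f.natDegree ≤ m + n →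
      ∃ β : ℕ → K, f = ∑ j ∈ Finset.Icc m (m + n), β j • P j := by
  intro n
  induction n with
  | zero =>
    intro m f hdvd hdeg
    obtain ⟨q, rfl⟩ := hdvd
    by_cases hq : q = 0
    · exact ⟨0, by simp [hq]⟩
    · have hdq : q.natDegree = 0 := by
        rw [natDegree_mul (aux_Pne hc hP m) hq, aux_Pdeg hc hP m] at hdeg
        omega
      obtain ⟨a, ha⟩ := natDegree_eq_zero.mp hdq
      refine ⟨fun _ => a, ?_⟩
      simp only [Nat.add_zero, Finset.Icc_self, Finset.sum_singleton]
      rw [smul_eq_C_mul, ha]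
      ring
  | succ n ih =>
    intro m f hdvd hdeg
    set d := m + n + 1 with hd
    set γ := f.coeff d / c d with hγ
    set g := f - γ • P d with hg
    have hgd : g.natDegree ≤ m + n := by
      refine natDegree_le_iff_coeff_eq_zero.mpr fun j hj => ?_
      have hPdd : (P d).natDegree = d := aux_Pdeg hc hP d
      rw [hg, coeff_sub, coeff_smul, smul_eq_mul]
      rcases eq_or_lt_of_le (show d ≤ j by omega) with rfl | hlt
      · rw [aux_Pcoeff hc hP, hγ, div_mul_cancel₀ _ (hc d), sub_self]
      · rw [coeff_eq_zero_of_natDegree_lt (by omega),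
          coeff_eq_zero_of_natDegree_lt (by omega)]
        ring
    have hdvdg : P m ∣ g := by
      refine dvd_sub hdvd ?_
      rw [smul_eq_C_mul]
      exact (aux_Pdvd hc hP (by omega)).mul_left _
    obtain ⟨β, hβ⟩ := ih m g hdvdg hgd
    refine ⟨Function.update β d γ, ?_⟩
    have hsum : ∑ j ∈ Finset.Icc m (m + n), Function.update β d γ j • P j
        = ∑ j ∈ Finset.Icc m (m + n), β j • P j := by
      refine Finset.sum_congr rfl fun j hj => ?_
      rw [Function.update_of_ne (by rw [Finset.mem_Icc] at hj; omega)]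
    rw [show m + (n + 1) = (m + n) + 1 from rfl,
      Finset.sum_Icc_succ_top (by omega), hsum, ← hβ, Function.update_self]
    rw [hg]
    ring

end Basis

/-- A factorial basis with root sequence `ρ` (here `ρ j` plays the role of `ρ_{j+1}`)
is `(A,0)`-compatible with the shift operator `E` iff for all `k` the multiset inclusion
`[ρ_1 + 1, …, ρ_k + 1] ⊆ [ρ_1, …, ρ_{k+A}]` holds. -/
theorem isCompatible_shift_iff_roots {K : Type*} [Field K] (P : ℕ → Polynomial K)
    (ρ : ℕ → K) (c : ℕ → K) (hc : ∀ k, c k ≠ 0)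
    (hP : ∀ k : ℕ, P k = Polynomial.C (c k) *
      ∏ j ∈ Finset.range k, (X - Polynomial.C (ρ j)))
    (A : ℕ) :
    IsCompatible P (⇑(Polynomial.taylor (1 : K))) A 0 ↔
      ∀ k : ℕ, (Finset.range k).val.map (fun j => ρ j + 1) ≤
        (Finset.range (k + A)).val.map ρ := by
  constructor
  · intro hcomp k
    obtain ⟨α, hα⟩ := hcomp (k + A)
    have hdvd : P k ∣ (taylor (1 : K)) (P (k + A)) := by
      rw [hα]
      refine Finset.dvd_sum fun i hi => ?_
      rw [Finset.mem_Icc] at hi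
      rw [smul_eq_C_mul]
      refine Dvd.dvd.mul_left ?_ _
      unfold zext
      split
      · exact aux_Pdvd hc hP (by omega)
      · exact dvd_zero _
    have hne : (taylor (1 : K)) (P (k + A)) ≠ 0 := by
      rw [aux_Pshift hc hP (k + A)]
      exact mul_ne_zero (by simpa using hc (k + A))
        (by rw [aux_prod_eq]; exact (aux_monic _).ne_zero)
    have hroots := roots.le_of_dvd hne hdvd
    rw [hP k, aux_Pshift hc hP (k + A), aux_prod_eq ρ k,
      aux_prod_eq (fun j => ρ j - 1) (k + A),
      roots_C_mul _ (hc k), roots_C_mul _ (hc (k + A)),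
      roots_multiset_prod_X_sub_C, roots_multiset_prod_X_sub_C] at hroots
    have h2 := Multiset.map_le_map (f := fun x => x + 1) hroots
    rw [Multiset.map_map, Multiset.map_map] at h2
    simpa [Function.comp_def, sub_add_cancel] using h2
  · intro H k
    set m := k - A with hm
    have hmk : m ≤ k := Nat.sub_le _ _
    have hdvd : P m ∣ (taylor (1 : K)) (P k) := by
      rw [aux_Pshift hc hP k, hP m]
      have hle : (Finset.range m).val.map ρ ≤
          (Finset.range k).val.map (fun j => ρ j - 1) := by
        by_cases hAk : A ≤ k
        · have hk : m + A = k := by omega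
          have h1 := H m
          rw [hk] at h1
          have h2 := Multiset.map_le_map (f := fun x => x - 1) h1
          rw [Multiset.map_map, Multiset.map_map] at h2
          simpa [Function.comp_def, add_sub_cancel_right] using h2
        · have hm0 : m = 0 := by omega
          simp [hm0]
      obtain ⟨q, hq⟩ := (aux_dvd_iff _ _).mpr hle
      refine ⟨C (c k) * C (c m)⁻¹ * q, ?_⟩
      rw [aux_prod_eq ρ m, aux_prod_eq (fun j => ρ j - 1) k, hq]
      have h1 : C (c m) * C (c m)⁻¹ = (1 : Polynomial K) := by
        rw [← C_mul, mul_inv_cancel₀ (hc m), map_one]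
      linear_combination (-(C (c k)) *
        (((Finset.range m).val.map ρ).map (fun a => X - C a)).prod * q) * h1
    have hdeg : ((taylor (1 : K)) (P k)).natDegree ≤ m + (k - m) := by
      rw [aux_Pshift hc hP k, natDegree_C_mul (hc k),
        aux_prod_eq (fun j => ρ j - 1) k, aux_natDegree]
      simp
      omega
    obtain ⟨β, hβ⟩ := aux_rep hc hP (k - m) m _ hdvd hdeg
    rw [Nat.add_sub_cancel' hmk] at hβ
    refine ⟨fun i => if 0 ≤ (k : ℤ) + i then β ((k : ℤ) + i).toNat else 0, ?_⟩
    rw [hβ]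
    have step1 : ∑ i ∈ Finset.Icc (-(A : ℤ)) ((0:ℕ) : ℤ),
        (if 0 ≤ (k : ℤ) + i then β ((k : ℤ) + i).toNat else 0) • zext P ((k : ℤ) + i)
        = ∑ i ∈ Finset.Icc ((m : ℤ) - k) 0,
        (if 0 ≤ (k : ℤ) + i then β ((k : ℤ) + i).toNat else 0) • zext P ((k : ℤ) + i) := by
      refine (Finset.sum_subset ?_ ?_).symm
      · intro x hx
        rw [Finset.mem_Icc] at hx ⊢
        omega
      · intro x hx hnx
        rw [Finset.mem_Icc] at hx hnx
        have hneg : (k : ℤ) + x < 0 := by omega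
        rw [if_neg (by omega), zero_smul]
    rw [step1]
    refine (Finset.sum_nbij' (fun i => ((k : ℤ) + i).toNat) (fun j => (j : ℤ) - k)
      ?_ ?_ ?_ ?_ ?_).symm
    · intro a ha
      rw [Finset.mem_Icc] at ha ⊢
      beta_reduce
      omega
    · intro a ha
      rw [Finset.mem_Icc] at ha ⊢
      beta_reduce
      omega
    · intro a ha
      rw [Finset.mem_Icc] at ha
      beta_reduce
      omega
    · intro a ha
      rw [Finset.mem_Icc] at ha
      beta_reduce
      omega
    · intro a ha
      rw [Finset.mem_Icc] at ha
      have h0 : 0 ≤ (k : ℤ) + a := by omega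
      rw [if_pos h0]
      unfold zext
      rw [if_pos h0]
end

section
/- A factorial basis B = ⟨P_k(n)⟩_{k=0}^∞ of K[x] is quasi-triangular if and only if its root sequence ρ = ⟨ρ_1, ρ_2, ρ_3, …⟩ satisfies both: (1) ⟨0, 1, 2, 3, …⟩ is a subsequence of ρ, and (2) for every n ∈ ℕ, the first appearance of n in ρ precedes the first appearance of n+1 in ρ. -/
open Polynomial Finset

/-- A factorial basis `P` is *quasi-triangular* if there is a strictly increasing
`f : ℕ → ℕ` with `P_k(n) = 0` for `k > f(n)` and `P_{f(n)}(n) ≠ 0`. -/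
def IsQuasiTriangular (K : Type*) [Field K] (P : ℕ → Polynomial K) : Prop :=
  ∃ f : ℕ → ℕ, StrictMono f ∧
    (∀ k n : ℕ, f n < k → (P k).eval (n : K) = 0) ∧
    (∀ n : ℕ, (P (f n)).eval (n : K) ≠ 0)

lemma evalZeroIff {K : Type*} [Field K] (P : ℕ → Polynomial K) (ρ : ℕ → K)
    (c : ℕ → K) (hc : ∀ k, c k ≠ 0)
    (hP : ∀ k : ℕ, P k = Polynomial.C (c k) *
      ∏ j ∈ Finset.range k, (X - Polynomial.C (ρ j)))
    (a : K) (k : ℕ) : (P k).eval a = 0 ↔ ∃ j < k, ρ j = a := by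
  rw [hP k]
  simp only [eval_mul, eval_C, eval_prod, eval_sub, eval_X, mul_eq_zero, hc k, false_or,
    Finset.prod_eq_zero_iff, Finset.mem_range, sub_eq_zero]
  constructor
  · rintro ⟨j, hj, h⟩; exact ⟨j, hj, h.symm⟩
  · rintro ⟨j, hj, h⟩; exact ⟨j, hj, h.symm⟩

/-- A factorial basis with root sequence `ρ` (here `ρ j` plays the role of `ρ_{j+1}`) is
quasi-triangular iff (1) `⟨0,1,2,…⟩` is a subsequence of `ρ`, and (2) for every `n`, the
first appearance of `n` in `ρ` precedes the first appearance of `n+1` in `ρ`. -/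
theorem quasiTriangular_iff_roots {K : Type*} [Field K] [CharZero K]
    (P : ℕ → Polynomial K) (ρ : ℕ → K) (c : ℕ → K) (hc : ∀ k, c k ≠ 0)
    (hP : ∀ k : ℕ, P k = Polynomial.C (c k) *
      ∏ j ∈ Finset.range k, (X - Polynomial.C (ρ j))) :
    IsQuasiTriangular K P ↔
      ((∃ g : ℕ → ℕ, StrictMono g ∧ ∀ n : ℕ, ρ (g n) = (n : K)) ∧
       (∀ n : ℕ, ∃ j : ℕ, ρ j = (n : K) ∧ ∀ i : ℕ, ρ i = (n : K) + 1 → j < i)) := by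
  have key := evalZeroIff P ρ c hc hP
  constructor
  · rintro ⟨f, hf, h0, h1⟩
    have hmin : ∀ n : ℕ, ∀ j < f n, ρ j ≠ (n : K) := by
      intro n j hj hρ
      exact h1 n ((key (n : K) (f n)).mpr ⟨j, hj, hρ⟩)
    have hval : ∀ n : ℕ, ρ (f n) = (n : K) := by
      intro n
      obtain ⟨j, hj, hρ⟩ := (key (n : K) (f n + 1)).mp (h0 (f n + 1) n (Nat.lt_succ_self _))
      rcases lt_or_eq_of_le (Nat.lt_succ_iff.mp hj) with h | h
      · exact absurd hρ (hmin n j h)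
      · rwa [← h]
    constructor
    · exact ⟨f, hf, hval⟩
    · intro n
      refine ⟨f n, hval n, fun i hi => ?_⟩
      have hi' : ρ i = ((n + 1 : ℕ) : K) := by push_cast; exact hi
      have : f (n + 1) ≤ i := by
        by_contra h
        exact hmin (n + 1) i (lt_of_not_ge h) hi'
      exact lt_of_lt_of_le (hf (Nat.lt_succ_self n)) this
  · rintro ⟨⟨g, hg, hgρ⟩, h2⟩
    classical
    have hex : ∀ n : ℕ, ∃ j : ℕ, ρ j = (n : K) := fun n => ⟨g n, hgρ n⟩
    set f : ℕ → ℕ := fun n => Nat.find (hex n) with hfdef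
    have hval : ∀ n, ρ (f n) = (n : K) := fun n => Nat.find_spec (hex n)
    have hmin : ∀ n : ℕ, ∀ j < f n, ρ j ≠ (n : K) := fun n j hj => Nat.find_min (hex n) hj
    have hmono : StrictMono f := by
      apply strictMono_nat_of_lt_succ
      intro n
      obtain ⟨j, hj, hji⟩ := h2 n
      have h1 : f n ≤ j := Nat.find_min' (hex n) hj
      have h2' : ρ (f (n + 1)) = (n : K) + 1 := by rw [hval (n + 1)]; push_cast; ring
      exact lt_of_le_of_lt h1 (hji _ h2')
    refine ⟨f, hmono, ?_, ?_⟩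
    · intro k n hk
      exact (key (n : K) k).mpr ⟨f n, hk, hval n⟩
    · intro n h
      obtain ⟨j, hj, hρ⟩ := (key (n : K) (f n)).mp h
      exact hmin n j hj hρ
end

section
/- Let B = ⟨P_k⟩_{k=0}^∞ be a quasi-triangular factorial basis of K[x] with f : ℕ → ℕ as in the definition of quasi-triangularity. Then for every sequence a : ℕ → K there exists a sequence b : ℕ → K such that a_n = Σ_{k=0}^{f(n)} b_k P_k(n) for all n ∈ ℕ. -/
open Polynomial Finset

open Classical in
/-- Auxiliary recursive definition of the coefficient sequence. -/
noncomputable def bfun {K : Type*} [Field K] (P : ℕ → Polynomial K) (f : ℕ → ℕ) (a : ℕ → K) :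
    ℕ → K
  | k =>
    if h : ∃ n, f n = k then
      (a h.choose - ∑ j : Fin k, bfun P f a j * (P (j : ℕ)).eval ((h.choose : ℕ) : K)) /
        (P k).eval ((h.choose : ℕ) : K)
    else 0
  termination_by k => k
  decreasing_by exact j.isLt

/-- If `P` is a quasi-triangular factorial basis (with witness `f`), then every sequence
`a : ℕ → K` can be represented as `a_n = ∑_{k=0}^{f(n)} b_k P_k(n)` for some `b : ℕ → K`. -/
theorem quasiTriangular_invertible {K : Type*} [Field K] (P : ℕ → Polynomial K)
    (hP : IsFactorialBasis K P) (f : ℕ → ℕ) (hf : StrictMono f)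
    (h0 : ∀ k n : ℕ, f n < k → (P k).eval (n : K) = 0)
    (h1 : ∀ n : ℕ, (P (f n)).eval (n : K) ≠ 0)
    (a : ℕ → K) :
    ∃ b : ℕ → K, ∀ n : ℕ, a n = ∑ k ∈ Finset.range (f n + 1), b k * (P k).eval (n : K) := by
  refine ⟨bfun P f a, fun n => ?_⟩
  rw [Finset.sum_range_succ]
  have hex : ∃ m, f m = f n := ⟨n, rfl⟩
  have hch : hex.choose = n := hf.injective hex.choose_spec
  have hb : bfun P f a (f n) =
      (a n - ∑ j : Fin (f n), bfun P f a j * (P (j : ℕ)).eval ((n : ℕ) : K)) /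
        (P (f n)).eval ((n : ℕ) : K) := by
    rw [bfun, dif_pos hex, hch]
  rw [hb, div_mul_cancel₀ _ (h1 n), Fin.sum_univ_eq_sum_range
    (fun j => bfun P f a j * (P j).eval ((n : ℕ) : K))]
  ring
end

section
/- Let a ∈ ℕ∖{0} and b ∈ K, and define P_k^{(a,b)}(x) = binom(a·x + b, k) = (1/k!)·∏_{j=0}^{k−1}(a·x + b − j) ∈ K[x]. Then: (1) the basis C_{a,b} = ⟨P_k^{(a,b)}(x)⟩_{k=0}^∞ is a factorial basis of K[x]; (2) C_{a,b} is (a,0)-compatible with the shift operator E, with E P_k^{(a,b)}(x) = Σ_{i=−a}^{0} binom(a, −i) P_{k+i}^{(a,b)}(x) for all k ∈ ℕ; and (3) if b ∈ ℕ then C_{a,b} is quasi-triangular, with f(n) = a·n + b. -/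
open Polynomial Finset

/-- The generalized binomial-coefficient polynomial
`binom(a·x + b, k) = (1/k!) ∏_{j=0}^{k-1} (a·x + b - j)`. -/
noncomputable def genBinom {K : Type*} [Field K] (a : ℕ) (b : K) (k : ℕ) : Polynomial K :=
  Polynomial.C ((k.factorial : K))⁻¹ *
    ∏ j ∈ Finset.range k, ((a : K) • X + Polynomial.C (b - (j : K)))

section Helpers

variable {K : Type*} [Field K] [CharZero K]

omit [CharZero K] in
lemma descPoch_eval (r : K) (k : ℕ) :
    (descPochhammer K k).eval r = ∏ j ∈ range k, (r - j) := by
  induction k with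
  | zero => simp
  | succ n ih => rw [descPochhammer_succ_eval, ih, prod_range_succ]

lemma ringChoose_eq (r : K) (k : ℕ) :
    Ring.choose r k = ((k.factorial : K))⁻¹ * ∏ j ∈ range k, (r - j) := by
  have h3 : (descPochhammer ℤ k).smeval r = (descPochhammer K k).eval r := by
    rw [← Polynomial.aeval_eq_smeval, aeval_def, eval₂_eq_eval_map, descPochhammer_map]
  have h2 := Ring.descPochhammer_eq_factorial_smul_choose r k
  rw [h3, descPoch_eval, nsmul_eq_mul] at h2
  have hk : (k.factorial : K) ≠ 0 := by exact_mod_cast k.factorial_ne_zero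
  field_simp
  rw [h2, mul_comm]

omit [CharZero K] in
lemma genBinom_eval (a : ℕ) (b : K) (k : ℕ) (x : K) :
    (genBinom a b k).eval x =
      ((k.factorial : K))⁻¹ * ∏ j ∈ range k, ((a : K) * x + b - j) := by
  simp only [genBinom, eval_mul, eval_C, eval_prod, eval_add, eval_smul, eval_X, smul_eq_mul,
    add_sub_assoc]

lemma genBinom_eval_choose (a : ℕ) (b : K) (k : ℕ) (x : K) :
    (genBinom a b k).eval x = Ring.choose ((a : K) * x + b) k := by
  rw [genBinom_eval, ringChoose_eq]

end Helpers

/-- For `a ∈ ℕ∖{0}` and `b ∈ K`: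
(1) `C_{a,b} = ⟨binom(a·x+b, k)⟩_k` is a factorial basis of `K[x]`;
(2) it is `(a,0)`-compatible with the shift `E`, with
`E P_k = ∑_{i=-a}^{0} binom(a,-i) P_{k+i}`;
(3) if `b ∈ ℕ`, it is quasi-triangular with `f(n) = a·n + b`. -/
theorem genBinom_basis_props {K : Type*} [Field K] [CharZero K] (a : ℕ) (ha : 0 < a)
    (b : K) :
    IsFactorialBasis K (genBinom a b) ∧
    (∀ k : ℕ, Polynomial.taylor (1 : K) (genBinom a b k) =
      ∑ i ∈ Finset.Icc (-(a : ℤ)) 0,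
        ((a.choose (-i).toNat : K)) • zext (genBinom a b) ((k : ℤ) + i)) ∧
    (∀ bn : ℕ, b = (bn : K) →
      (StrictMono (fun n : ℕ => a * n + bn) ∧
       (∀ k n : ℕ, a * n + bn < k → (genBinom a b k).eval (n : K) = 0) ∧
       (∀ n : ℕ, (genBinom a b (a * n + bn)).eval (n : K) ≠ 0))) := by
  have haK : (a : K) ≠ 0 := Nat.cast_ne_zero.mpr ha.ne'
  refine ⟨?_, ?_, ?_⟩
  · -- factorial basis
    intro k
    constructor
    · rw [genBinom, degree_C_mul (inv_ne_zero (by exact_mod_cast k.factorial_ne_zero)),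
        degree_prod]
      have : ∀ j ∈ range k, ((a : K) • X + Polynomial.C (b - (j : K))).degree = 1 := by
        intro j _
        rw [smul_eq_C_mul]
        exact degree_linear haK
      rw [Finset.sum_congr rfl this]
      simp
    · refine ⟨Polynomial.C (((k : K) + 1))⁻¹ *
        ((a : K) • X + Polynomial.C (b - (k : K))), ?_⟩
      rw [genBinom, genBinom, prod_range_succ]
      have h1 : ((k + 1).factorial : K)⁻¹ = (k.factorial : K)⁻¹ * ((k : K) + 1)⁻¹ := by
        rw [Nat.factorial_succ]
        push_cast
        rw [mul_inv, mul_comm]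
      rw [h1]
      simp only [map_mul]
      ring
  · -- compatibility with shift
    intro k
    apply Polynomial.funext
    intro x
    set r : K := (a : K) * x + b with hr
    have hL : (Polynomial.taylor (1 : K) (genBinom a b k)).eval x =
        Ring.choose (r + (a : K)) k := by
      rw [taylor_eval, genBinom_eval_choose]
      congr 1
      ring
    rw [hL]
    have hV := Ring.add_choose_eq (r := r) (s := (a : K)) k (Commute.all _ _)
    -- RHS evaluation
    have hRHS : (∑ i ∈ Finset.Icc (-(a : ℤ)) 0,
        ((a.choose (-i).toNat : K)) • zext (genBinom a b) ((k : ℤ) + i)).eval x =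
        ∑ j ∈ range (a + 1),
          (a.choose j : K) * (if j ≤ k then Ring.choose r (k - j) else 0) := by
      rw [eval_finset_sum]
      rw [show Finset.Icc (-(a : ℤ)) 0 = (range (a + 1)).image (fun j : ℕ => -(j : ℤ)) by
        ext i
        simp only [Finset.mem_Icc, Finset.mem_image, Finset.mem_range]
        constructor
        · rintro ⟨h1, h2⟩
          exact ⟨(-i).toNat, by omega, by omega⟩
        · rintro ⟨j, hj, rfl⟩
          omega]
      rw [Finset.sum_image (fun j _ j' _ h => by omega)]
      refine Finset.sum_congr rfl fun j hj => ?_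
      have h1 : (-(-(j : ℤ))).toNat = j := by omega
      rw [h1, eval_smul, smul_eq_mul]
      congr 1
      unfold zext
      by_cases hjk : j ≤ k
      · rw [if_pos (by omega), if_pos hjk]
        have h2 : ((k : ℤ) + -(j : ℤ)).toNat = k - j := by omega
        rw [h2, genBinom_eval_choose]
      · rw [if_neg (by omega), if_neg hjk, eval_zero]
    rw [hRHS, hV]
    -- turn the Vandermonde sum into the same range sum
    rw [Finset.Nat.sum_antidiagonal_eq_sum_range_succ_mk]
    have hcast : ∀ m : ℕ, Ring.choose ((a : ℕ) : K) m = (a.choose m : K) :=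
      fun m => Ring.choose_natCast a m
    calc ∑ j ∈ range (k + 1), Ring.choose r j * Ring.choose ((a : ℕ) : K) (k - j)
        = ∑ j ∈ range (k + 1),
            (a.choose j : K) * (if j ≤ k then Ring.choose r (k - j) else 0) := by
          rw [← Finset.sum_range_reflect]
          refine Finset.sum_congr rfl fun j hj => ?_
          rw [Finset.mem_range] at hj
          have h1 : k + 1 - 1 - j = k - j := by omega
          have h2 : k - (k - j) = j := by omega
          rw [h1, h2, hcast, if_pos (by omega), mul_comm]
      _ = ∑ j ∈ range (a + k + 1),
            (a.choose j : K) * (if j ≤ k then Ring.choose r (k - j) else 0) := by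
          refine Finset.sum_subset (Finset.range_subset_range.mpr (by omega)) fun j _ hj => ?_
          rw [Finset.mem_range] at hj
          rw [if_neg (by omega), mul_zero]
      _ = ∑ j ∈ range (a + 1),
            (a.choose j : K) * (if j ≤ k then Ring.choose r (k - j) else 0) := by
          symm
          refine Finset.sum_subset (Finset.range_subset_range.mpr (by omega)) fun j _ hj => ?_
          rw [Finset.mem_range] at hj
          rw [Nat.choose_eq_zero_of_lt (by omega), Nat.cast_zero, zero_mul]
  · -- quasi-triangular
    rintro bn rfl
    refine ⟨?_, ?_, ?_⟩
    · intro m n h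
      have : a * m < a * n := Nat.mul_lt_mul_of_pos_left h ha
      simp only
      omega
    · intro k n hk
      rw [genBinom_eval]
      have hmem : a * n + bn ∈ range k := Finset.mem_range.mpr hk
      rw [Finset.prod_eq_zero hmem (by push_cast; ring), mul_zero]
    · intro n
      rw [genBinom_eval]
      set m := a * n + bn with hm
      have h1 : ((m.factorial : K))⁻¹ ≠ 0 := inv_ne_zero (by exact_mod_cast m.factorial_ne_zero)
      refine mul_ne_zero h1 (Finset.prod_ne_zero_iff.mpr fun j hj => ?_)
      rw [Finset.mem_range] at hj
      have : (a : K) * n + (bn : K) - (j : K) = ((m - j : ℕ) : K) := by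
        push_cast [Nat.cast_sub hj.le, hm, Nat.cast_sub (by omega : j ≤ a * n + bn)]
        ring
      rw [this]
      exact Nat.cast_ne_zero.mpr (by omega)
end

section
/- Let L = Σ_{i=0}^{r} p_i(x) E^i be a linear recurrence operator with polynomial coefficients p_i ∈ K[x] and p_r ≠ 0, where E is the shift operator. For any m ∈ ℕ, write L(binom(x, m)) = Σ_{j=0}^{∞} λ_j · binom(x, j) as the (unique, finitely supported) expansion in the binomial-coefficient basis. Then λ_j = 0 whenever m − j > r, and if m ≥ r then λ_{m−r} = p_r(m−r), i.e. the coefficient of binom(x, k) in the expansion of L(binom(x, k+r)) equals the value p_r(k) for every k ∈ ℕ. -/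
open Polynomial Finset

/-- The binomial-coefficient polynomial `binom(x, k) = x(x-1)⋯(x-k+1)/k! ∈ K[x]`. -/
noncomputable def binomPoly (K : Type*) [Field K] (k : ℕ) : Polynomial K :=
  Polynomial.C ((k.factorial : K))⁻¹ *
    ∏ j ∈ Finset.range k, (X - Polynomial.C (j : K))

lemma binomPoly_prod_eq (K : Type*) [Field K] (k : ℕ) :
    (∏ j ∈ Finset.range k, (X - Polynomial.C (j : K))) = descPochhammer K k := by
  induction k with
  | zero => simp
  | succ k ih =>
    rw [Finset.prod_range_succ, ih, descPochhammer_succ_right]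
    norm_cast

lemma binomPoly_eval_nat {K : Type*} [Field K] [CharZero K] (k n : ℕ) :
    (binomPoly K k).eval (n : K) = (n.choose k : K) := by
  rw [binomPoly, binomPoly_prod_eq, eval_mul, eval_C,
    descPochhammer_eval_eq_descFactorial, Nat.descFactorial_eq_factorial_mul_choose]
  push_cast
  rw [← mul_assoc, inv_mul_cancel₀, one_mul]
  exact_mod_cast Nat.cast_ne_zero.mpr k.factorial_ne_zero

/-- Let `L = ∑_{i=0}^{r} p_i(x) E^i` with `p_r ≠ 0`, and let
`L (binom(x,m)) = ∑_j λ_j binom(x,j)` be the (finitely supported) expansion in the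
binomial-coefficient basis.  Then `λ_j = 0` whenever `j + r < m`, and if `r ≤ m` then
`λ_{m-r} = p_r(m-r)`. -/
theorem binomBasis_leading_coeff {K : Type*} [Field K] [CharZero K]
    (r : ℕ) (p : ℕ → Polynomial K) (hp : p r ≠ 0) (m : ℕ)
    (lam : ℕ → K) (N : ℕ)
    (hexp : ∑ i ∈ Finset.range (r + 1), p i * Polynomial.taylor ((i : K)) (binomPoly K m) =
      ∑ j ∈ Finset.range N, lam j • binomPoly K j)
    (hvanish : ∀ j : ℕ, N ≤ j → lam j = 0) :
    (∀ j : ℕ, j + r < m → lam j = 0) ∧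
    (r ≤ m → lam (m - r) = (p r).eval ((m - r : ℕ) : K)) := by
  have heval : ∀ n : ℕ,
      ∑ i ∈ Finset.range (r + 1), (p i).eval (n : K) * ((n + i).choose m : K) =
        ∑ j ∈ Finset.range N, lam j * (n.choose j : K) := by
    intro n
    have h := congrArg (Polynomial.eval (n : K)) hexp
    simpa [eval_finset_sum, taylor_eval, ← Nat.cast_add, binomPoly_eval_nat,
      smul_eq_mul] using h
  -- Part 1 by strong induction
  have part1 : ∀ j : ℕ, j + r < m → lam j = 0 := by
    intro j
    induction j using Nat.strong_induction_on with
    | _ j ih =>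
      intro hj
      by_cases hjN : j < N
      · have h := heval j
        have hL : ∑ i ∈ Finset.range (r + 1), (p i).eval (j : K) * ((j + i).choose m : K)
            = 0 := by
          apply Finset.sum_eq_zero
          intro i hi
          have hi' : i ≤ r := Finset.mem_range_succ_iff.mp hi
          have : j + i < m := by omega
          rw [Nat.choose_eq_zero_of_lt this]
          simp
        have hR : ∑ t ∈ Finset.range N, lam t * (j.choose t : K) = lam j := by
          rw [Finset.sum_eq_single j]
          · simp
          · intro t ht htj
            rcases lt_or_gt_of_ne htj with hlt | hgt
            · rw [ih t hlt (by omega), zero_mul]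
            · rw [Nat.choose_eq_zero_of_lt hgt]
              simp
          · intro h'; exact absurd (Finset.mem_range.mpr hjN) h'
        rw [hL] at h
        rw [hR] at h
        exact h.symm
      · exact hvanish j (by omega)
  refine ⟨part1, ?_⟩
  intro hrm
  set k := m - r with hk
  have hkr : k + r = m := by omega
  have h := heval k
  have hL : ∑ i ∈ Finset.range (r + 1), (p i).eval (k : K) * ((k + i).choose m : K)
      = (p r).eval (k : K) := by
    rw [Finset.sum_eq_single r]
    · rw [hkr, Nat.choose_self]; simp
    · intro i hi hir
      have : i < r := by simp at hi; omega
      rw [Nat.choose_eq_zero_of_lt (by omega)]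
      simp
    · intro h'; exact absurd (Finset.self_mem_range_succ r) h'
  rw [hL] at h
  by_cases hkN : k < N
  · have hR : ∑ t ∈ Finset.range N, lam t * (k.choose t : K) = lam k := by
      rw [Finset.sum_eq_single k]
      · simp
      · intro t ht htk
        rcases lt_or_gt_of_ne htk with hlt | hgt
        · rw [part1 t (by omega), zero_mul]
        · rw [Nat.choose_eq_zero_of_lt hgt]; simp
      · intro h'; exact absurd (Finset.mem_range.mpr hkN) h'
    rw [hR] at h
    exact h.symm
  · have hR : ∑ t ∈ Finset.range N, lam t * (k.choose t : K) = 0 := by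
      apply Finset.sum_eq_zero
      intro t ht
      simp only [Finset.mem_range] at ht
      rw [part1 t (by omega), zero_mul]
    rw [hR] at h
    rw [hvanish k (by omega)]
    exact h.symm
end

section
/- Let B_i = ⟨P_n^{(i)}(x)⟩_{n=0}^∞ for i = 1, …, F be factorial bases of K[x], let m ∈ ℕ∖{0} and c = (c_0, …, c_{m−1}) ∈ {1,…,F}^m, and let B = ⟨Q_n(x)⟩_{n=0}^∞ be the c-shuffled basis of B_1, …, B_F. Then B is a factorial basis of K[x]. Moreover, if every B_i is quasi-triangular, then B is quasi-triangular. -/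
open Polynomial Finset

/-- `sCount c i t = s_i(t) = |{r < t : c_r = i}|`. -/
def sCount (c : ℕ → ℕ) (i t : ℕ) : ℕ :=
  ((Finset.range t).filter (fun r => c r = i)).card

/-- The `c`-shuffled basis of the bases `P 1, …, P F`:
`Q_{mk+j} = ∏_{i=1}^{F} P^{(i)}_{k·s_i(m) + s_i(j)}`. -/
noncomputable def shuffled {K : Type*} [Field K] (F m : ℕ) (c : ℕ → ℕ)
    (P : ℕ → ℕ → Polynomial K) (n : ℕ) : Polynomial K :=
  ∏ i ∈ Finset.Icc 1 F, P i ((n / m) * sCount c i m + sCount c i (n % m))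

lemma sCount_mono (c : ℕ → ℕ) (i : ℕ) : Monotone (sCount c i) := fun a b hab =>
  Finset.card_le_card (Finset.filter_subset_filter _ (Finset.range_subset_range.2 hab))

lemma sCount_succ_le (c : ℕ → ℕ) (i t : ℕ) : sCount c i (t + 1) ≤ sCount c i t + 1 := by
  unfold sCount
  rw [Finset.range_add_one, Finset.filter_insert]
  split
  · exact Finset.card_insert_le _ _
  · exact Nat.le_succ _

lemma sum_sCount (F m : ℕ) (c : ℕ → ℕ) (hc : ∀ r < m, 1 ≤ c r ∧ c r ≤ F)
    {t : ℕ} (ht : t ≤ m) : ∑ i ∈ Finset.Icc 1 F, sCount c i t = t := by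
  unfold sCount
  simp_rw [Finset.card_filter]
  rw [Finset.sum_comm]
  have h : ∀ r ∈ Finset.range t, (∑ i ∈ Finset.Icc 1 F, if c r = i then 1 else 0) = 1 := by
    intro r hr
    rw [Finset.sum_ite_eq]
    have hcr := hc r (lt_of_lt_of_le (Finset.mem_range.1 hr) ht)
    simp [Finset.mem_Icc.2 hcr]
  rw [Finset.sum_congr rfl h]
  simp

lemma e_step (m : ℕ) (hm : 0 < m) (c : ℕ → ℕ) (i n : ℕ) :
    (n / m) * sCount c i m + sCount c i (n % m)
      ≤ ((n + 1) / m) * sCount c i m + sCount c i ((n + 1) % m) ∧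
    ((n + 1) / m) * sCount c i m + sCount c i ((n + 1) % m)
      ≤ (n / m) * sCount c i m + sCount c i (n % m) + 1 := by
  obtain ⟨q, j, hj, rfl⟩ : ∃ q j, j < m ∧ m * q + j = n :=
    ⟨n / m, n % m, Nat.mod_lt _ hm, Nat.div_add_mod n m⟩
  have hdiv : (m * q + j) / m = q := by
    rw [Nat.mul_add_div hm, Nat.div_eq_of_lt hj, Nat.add_zero]
  have hmod : (m * q + j) % m = j := by
    rw [Nat.mul_add_mod, Nat.mod_eq_of_lt hj]
  rcases lt_or_eq_of_le (Nat.succ_le_of_lt hj) with hj1 | hj1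
  · have hdiv' : (m * q + j + 1) / m = q := by
      rw [Nat.add_assoc, Nat.mul_add_div hm, Nat.div_eq_of_lt hj1, Nat.add_zero]
    have hmod' : (m * q + j + 1) % m = j + 1 := by
      rw [Nat.add_assoc, Nat.mul_add_mod, Nat.mod_eq_of_lt hj1]
    rw [hdiv, hmod, hdiv', hmod']
    have h1 : sCount c i j ≤ sCount c i (j + 1) := sCount_mono c i (Nat.le_succ j)
    have h2 := sCount_succ_le c i j
    omega
  · have hn : m * q + j + 1 = m * (q + 1) := by
      rw [Nat.mul_add, Nat.mul_one]; omega
    have hdiv' : (m * q + j + 1) / m = q + 1 := by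
      rw [hn, Nat.mul_div_cancel_left _ hm]
    have hmod' : (m * q + j + 1) % m = 0 := by rw [hn, Nat.mul_mod_right]
    rw [hdiv, hmod, hdiv', hmod']
    have h1 : sCount c i j ≤ sCount c i m := sCount_mono c i (le_of_lt hj)
    have h2 : sCount c i m ≤ sCount c i j + 1 := hj1 ▸ sCount_succ_le c i j
    have h0 : sCount c i 0 = 0 := by simp [sCount]
    have hq : (q + 1) * sCount c i m = q * sCount c i m + sCount c i m :=
      Nat.succ_mul _ _
    omega

/-- The `c`-shuffled basis of factorial bases is factorial; moreover, if every factor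
basis is quasi-triangular, so is the shuffled basis. -/
theorem shuffled_isFactorial_and_quasiTriangular {K : Type*} [Field K]
    (F m : ℕ) (hF : 0 < F) (hm : 0 < m)
    (c : ℕ → ℕ) (hc : ∀ r < m, 1 ≤ c r ∧ c r ≤ F)
    (P : ℕ → ℕ → Polynomial K)
    (hP : ∀ i : ℕ, 1 ≤ i → i ≤ F → IsFactorialBasis K (P i)) :
    IsFactorialBasis K (shuffled F m c P) ∧
    ((∀ i : ℕ, 1 ≤ i → i ≤ F → IsQuasiTriangular K (P i)) →
      IsQuasiTriangular K (shuffled F m c P)) := by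
  classical
  set e : ℕ → ℕ → ℕ := fun i n => (n / m) * sCount c i m + sCount c i (n % m) with he
  have hQdef : ∀ n, shuffled F m c P n = ∏ i ∈ Finset.Icc 1 F, P i (e i n) := fun n => rfl
  have hPdvd : ∀ i, 1 ≤ i → i ≤ F → ∀ {k l : ℕ}, k ≤ l → P i k ∣ P i l := by
    intro i h1 h2 k l hkl
    induction hkl with
    | refl => exact dvd_rfl
    | step _ ih => exact ih.trans (dvd_refl _) |>.trans (hP i h1 h2 _).2
  -- sum of e i n over i is n
  have hesum : ∀ n, ∑ i ∈ Finset.Icc 1 F, e i n = n := by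
    intro n
    simp only [he]
    rw [Finset.sum_add_distrib, ← Finset.mul_sum,
      sum_sCount F m c hc (le_refl m), sum_sCount F m c hc (le_of_lt (Nat.mod_lt n hm)),
      mul_comm]
    exact Nat.div_add_mod n m
  have hdeg : ∀ n, (shuffled F m c P n).degree = (n : ℕ) := by
    intro n
    rw [hQdef, Polynomial.degree_prod]
    have h : ∀ i ∈ Finset.Icc 1 F, (P i (e i n)).degree = ((e i n : ℕ) : WithBot ℕ) := by
      intro i hi
      obtain ⟨h1, h2⟩ := Finset.mem_Icc.1 hi
      exact (hP i h1 h2 _).1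
    rw [Finset.sum_congr rfl h, ← Nat.cast_sum, hesum n]
  have hfact : IsFactorialBasis K (shuffled F m c P) := by
    intro n
    refine ⟨hdeg n, ?_⟩
    rw [hQdef, hQdef]
    refine Finset.prod_dvd_prod_of_dvd _ _ ?_
    intro i hi
    obtain ⟨h1, h2⟩ := Finset.mem_Icc.1 hi
    exact hPdvd i h1 h2 (e_step m hm c i n).1
  refine ⟨hfact, ?_⟩
  intro hqt
  have hex : ∀ i, ∃ f : ℕ → ℕ, 1 ≤ i → i ≤ F →
      StrictMono f ∧ (∀ k n : ℕ, f n < k → (P i k).eval (n : K) = 0) ∧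
        (∀ n : ℕ, (P i (f n)).eval (n : K) ≠ 0) := by
    intro i
    by_cases h : 1 ≤ i ∧ i ≤ F
    · obtain ⟨f, hf⟩ := hqt i h.1 h.2
      exact ⟨f, fun _ _ => hf⟩
    · exact ⟨id, fun h1 h2 => absurd ⟨h1, h2⟩ h⟩
  choose f hf using hex
  have hnz : ∀ i, 1 ≤ i → i ≤ F → ∀ k n : ℕ, k ≤ f i n → (P i k).eval (n : K) ≠ 0 := by
    intro i h1 h2 k n hk h0
    obtain ⟨r, hr⟩ := hPdvd i h1 h2 hk
    exact (hf i h1 h2).2.2 n (by rw [hr, Polynomial.eval_mul, h0, zero_mul])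
  -- choose i0 with sCount c i0 m ≥ 1
  obtain ⟨i0, hi0mem, hi0s⟩ : ∃ i0 ∈ Finset.Icc 1 F, 1 ≤ sCount c i0 m := by
    by_contra h
    push_neg at h
    have h0 : ∑ i ∈ Finset.Icc 1 F, sCount c i m = 0 :=
      Finset.sum_eq_zero fun i hi => by have := h i hi; omega
    rw [sum_sCount F m c hc le_rfl] at h0
    omega
  set S : ℕ → Set ℕ := fun n => {N | ∀ i ∈ Finset.Icc 1 F, e i N ≤ f i n} with hS
  have hzero : ∀ n, 0 ∈ S n := by
    intro n
    simp only [hS, Set.mem_setOf_eq]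
    intro i hi
    simp [he, sCount]
  have hbdd : ∀ n, BddAbove (S n) := by
    intro n
    refine ⟨m * (f i0 n + 1), fun N hN => ?_⟩
    have h1 : e i0 N ≤ f i0 n := hN i0 hi0mem
    have h2 : N / m ≤ e i0 N := by
      have := Nat.mul_le_mul_left (N / m) hi0s
      simp only [he, mul_one] at this ⊢
      omega
    have h3 : N / m ≤ f i0 n := le_trans h2 h1
    calc N = m * (N / m) + N % m := (Nat.div_add_mod N m).symm
      _ ≤ m * f i0 n + N % m := by
          exact Nat.add_le_add_right (Nat.mul_le_mul_left m h3) _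
      _ ≤ m * f i0 n + m := by
          exact Nat.add_le_add_left (le_of_lt (Nat.mod_lt N hm)) _
      _ = m * (f i0 n + 1) := by ring
  set g : ℕ → ℕ := fun n => sSup (S n) with hg
  have hgmem : ∀ n, g n ∈ S n := fun n => Nat.sSup_mem ⟨0, hzero n⟩ (hbdd n)
  have hgmax : ∀ n N, N ∈ S n → N ≤ g n := fun n N h => le_csSup (hbdd n) h
  refine ⟨g, ?_, ?_, ?_⟩
  · refine strictMono_nat_of_lt_succ fun n => ?_
    have hmem : g n + 1 ∈ S (n + 1) := by
      intro i hi
      obtain ⟨h1, h2⟩ := Finset.mem_Icc.1 hi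
      have ha : e i (g n) ≤ f i n := hgmem n i hi
      have hb : e i (g n + 1) ≤ e i (g n) + 1 := (e_step m hm c i (g n)).2
      have hcc : f i n < f i (n + 1) := (hf i h1 h2).1 (Nat.lt_succ_self n)
      omega
    exact Nat.lt_of_succ_le (hgmax (n + 1) _ hmem)
  · intro k n hk
    have hknot : k ∉ S n := fun h => absurd (hgmax n k h) (Nat.not_le.2 hk)
    simp only [hS, Set.mem_setOf_eq, not_forall] at hknot
    obtain ⟨i, hi, hgt⟩ := hknot
    push_neg at hgt
    obtain ⟨h1, h2⟩ := Finset.mem_Icc.1 hi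
    rw [hQdef, Polynomial.eval_prod]
    exact Finset.prod_eq_zero hi ((hf i h1 h2).2.1 _ n hgt)
  · intro n
    rw [hQdef, Polynomial.eval_prod]
    rw [Finset.prod_ne_zero_iff]
    intro i hi
    obtain ⟨h1, h2⟩ := Finset.mem_Icc.1 hi
    exact hnz i h1 h2 _ n (hgmem n i hi)
end

section
/- Let m ∈ ℕ∖{0} and let B = ⟨Q_n(x)⟩_{n=0}^∞ be the c-shuffled basis of factorial bases B_i = ⟨P_n^{(i)}(x)⟩_{n=0}^∞ for i = 1, …, F. Suppose each B_i is (0,1)-compatible in t_i sections with the multiplication-by-x operator X. Then for any t ∈ ℕ∖{0} such that t_i divides t·s_i(m) for each i = 1, …, F, the shuffled basis B is (0,1)-compatible in m·t sections with X. -/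
open Polynomial Finset

/-- `(A,B₀)`-compatibility *in `m` sections* of a basis `P` with an operator `L`. -/
def IsCompatibleInSections {K : Type*} [Field K] (P : ℕ → Polynomial K)
    (L : Polynomial K → Polynomial K) (A B₀ m : ℕ) : Prop :=
  ∃ num den : ℕ → ℤ → Polynomial K,
    (∀ (j : ℕ) (i : ℤ) (k : ℕ), (den j i).eval (k : K) ≠ 0) ∧
    (∀ k : ℕ, ∀ j < m,
      L (P (m * k + j)) = ∑ i ∈ Finset.Icc (-(A : ℤ)) (B₀ : ℤ),
        ((num j i).eval (k : K) / (den j i).eval (k : K)) • zext P (((m * k + j : ℕ) : ℤ) + i))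

lemma sCount_succ (c : ℕ → ℕ) (i r : ℕ) :
    sCount c i (r + 1) = sCount c i r + (if c r = i then 1 else 0) := by
  unfold sCount
  rw [Finset.range_add_one, Finset.filter_insert]
  split
  · rw [Finset.card_insert_of_notMem (by simp)]
  · simp

lemma Estep (c : ℕ → ℕ) (m : ℕ) (hm : 0 < m) (n i : ℕ) :
    ((n + 1) / m) * sCount c i m + sCount c i ((n + 1) % m)
      = (n / m) * sCount c i m + sCount c i (n % m)
        + (if c (n % m) = i then 1 else 0) := by
  have hjm := Nat.div_add_mod n m
  have hlt : n % m < m := Nat.mod_lt n hm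
  rcases Nat.lt_or_ge (n % m + 1) m with h | h
  · have key : n + 1 = m * (n / m) + (n % m + 1) := by omega
    have h1 : (n + 1) / m = n / m := by
      rw [key, Nat.mul_add_div hm, Nat.div_eq_of_lt h, add_zero]
    have h2 : (n + 1) % m = n % m + 1 := by
      rw [key, Nat.mul_add_mod, Nat.mod_eq_of_lt h]
    rw [h1, h2, sCount_succ]
    ring
  · have hm1 : n % m + 1 = m := by omega
    have key : n + 1 = m * (n / m + 1) + 0 := by
      rw [Nat.mul_add, Nat.mul_one, add_zero]; omega
    have h1 : (n + 1) / m = n / m + 1 := by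
      rw [key, Nat.mul_add_div hm, Nat.zero_div, add_zero]
    have h2 : (n + 1) % m = 0 := by
      rw [key, Nat.mul_add_mod, Nat.zero_mod]
    have hS := sCount_succ c i (n % m)
    rw [hm1] at hS
    rw [h1, h2]
    have h0 : sCount c i 0 = 0 := by simp [sCount]
    rw [h0, hS]
    ring

lemma zext_nat {K : Type*} [Field K] (P : ℕ → Polynomial K) (N : ℕ) :
    zext P (N : ℤ) = P N := by
  unfold zext
  rw [if_pos (Int.natCast_nonneg N), Int.toNat_natCast]

lemma zext_natCast {K : Type*} [Field K] (P : ℕ → Polynomial K) (N : ℕ) :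
    zext P ((N : ℤ) + 0) = P N := by
  rw [add_zero, zext_nat]

lemma zext_natCast_one {K : Type*} [Field K] (P : ℕ → Polynomial K) (N : ℕ) :
    zext P ((N : ℤ) + 1) = P (N + 1) := by
  have h : ((N : ℤ) + 1) = ((N + 1 : ℕ) : ℤ) := by push_cast; ring
  rw [h, zext_nat]

/-- If each factorial basis `P i` is `(0,1)`-compatible in `t_i` sections with the
multiplication-by-`x` operator `X`, and `t` is such that `t_i ∣ t·s_i(m)` for each `i`,
then the `c`-shuffled basis is `(0,1)`-compatible in `m·t` sections with `X`. -/
theorem shuffled_compatible_X {K : Type*} [Field K]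
    (F m : ℕ) (hF : 0 < F) (hm : 0 < m)
    (c : ℕ → ℕ) (hc : ∀ r < m, 1 ≤ c r ∧ c r ≤ F)
    (P : ℕ → ℕ → Polynomial K)
    (hP : ∀ i : ℕ, 1 ≤ i → i ≤ F → IsFactorialBasis K (P i))
    (tt : ℕ → ℕ) (htt : ∀ i : ℕ, 1 ≤ i → i ≤ F → 0 < tt i)
    (hX : ∀ i : ℕ, 1 ≤ i → i ≤ F →
      IsCompatibleInSections (P i) (fun p => X * p) 0 1 (tt i))
    (t : ℕ) (ht : 0 < t)
    (hdvd : ∀ i : ℕ, 1 ≤ i → i ≤ F → tt i ∣ t * sCount c i m) :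
    IsCompatibleInSections (shuffled F m c P) (fun p => X * p) 0 1 (m * t) := by
  classical
  obtain ⟨NUM, DEN, hDEN, hcomp⟩ :
      ∃ NUM DEN : ℕ → ℕ → ℤ → Polynomial K,
      (∀ i j ii (k : ℕ), ((DEN i j ii).eval (k : K)) ≠ 0) ∧
      (∀ i, 1 ≤ i → i ≤ F → ∀ k : ℕ, ∀ j < tt i,
        X * P i (tt i * k + j) = ∑ ii ∈ Finset.Icc (-(0 : ℤ)) (1 : ℤ),
          ((NUM i j ii).eval (k : K) / (DEN i j ii).eval (k : K)) •
            zext (P i) (((tt i * k + j : ℕ) : ℤ) + ii)) := by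
    refine ⟨fun i => if h : 1 ≤ i ∧ i ≤ F then (hX i h.1 h.2).choose else fun _ _ => 1,
            fun i => if h : 1 ≤ i ∧ i ≤ F then (hX i h.1 h.2).choose_spec.choose
              else fun _ _ => 1, ?_, ?_⟩
    · intro i j ii k
      by_cases h : 1 ≤ i ∧ i ≤ F
      · simp only [dif_pos h]
        exact (hX i h.1 h.2).choose_spec.choose_spec.1 j ii k
      · simp only [dif_neg h]
        simp
    · intro i h1 h2 k j hj
      have h : 1 ≤ i ∧ i ≤ F := ⟨h1, h2⟩
      simp only [dif_pos h]
      exact (hX i h.1 h.2).choose_spec.choose_spec.2 k j hj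
  refine ⟨fun j ii =>
      (NUM (c (j % m)) ((j / m * sCount c (c (j % m)) m + sCount c (c (j % m)) (j % m))
          % tt (c (j % m))) ii).comp
        (C ((t * sCount c (c (j % m)) m / tt (c (j % m)) : ℕ) : K) * X
          + C (((j / m * sCount c (c (j % m)) m + sCount c (c (j % m)) (j % m))
              / tt (c (j % m)) : ℕ) : K)),
    fun j ii =>
      (DEN (c (j % m)) ((j / m * sCount c (c (j % m)) m + sCount c (c (j % m)) (j % m))
          % tt (c (j % m))) ii).comp
        (C ((t * sCount c (c (j % m)) m / tt (c (j % m)) : ℕ) : K) * X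
          + C (((j / m * sCount c (c (j % m)) m + sCount c (c (j % m)) (j % m))
              / tt (c (j % m)) : ℕ) : K)), ?_, ?_⟩
  · intro j ii k
    rw [eval_comp]
    have harg : ((C ((t * sCount c (c (j % m)) m / tt (c (j % m)) : ℕ) : K) * X
        + C (((j / m * sCount c (c (j % m)) m + sCount c (c (j % m)) (j % m))
            / tt (c (j % m)) : ℕ) : K)).eval (k : K))
        = (((t * sCount c (c (j % m)) m / tt (c (j % m))) * k
            + (j / m * sCount c (c (j % m)) m + sCount c (c (j % m)) (j % m))
              / tt (c (j % m)) : ℕ) : K) := by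
      simp only [eval_add, eval_mul, eval_C, eval_X]
      push_cast
      ring
    rw [harg]
    exact hDEN _ _ _ _
  · intro k j hj
    simp only [Nat.cast_zero, Nat.cast_one]
    set q := j / m with hq'
    set r := j % m with hr'
    set i₀ := c r with hi₀'
    set T := tt i₀ with hT'
    set s := sCount c i₀ m with hs'
    set s' := sCount c i₀ r with hs''
    set d := t * s / T with hd'
    set a := (q * s + s') / T with ha'
    set b := (q * s + s') % T with hb'
    have hrm : r < m := Nat.mod_lt j hm
    obtain ⟨h1, h2⟩ := hc r hrm
    have hT : 0 < T := htt i₀ h1 h2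
    have hdT : T ∣ t * s := hdvd i₀ h1 h2
    have hds : t * s = T * d := (Nat.mul_div_cancel' hdT).symm
    have hab : q * s + s' = T * a + b := (Nat.div_add_mod (q * s + s') T).symm
    have hb : b < T := Nat.mod_lt _ hT
    set n := m * t * k + j with hn'
    have hjm := Nat.div_add_mod j m
    have key : n = m * (t * k + q) + r := by
      rw [hn']
      conv_lhs => rw [← hjm]
      ring
    have hq : n / m = t * k + q := by
      rw [key, Nat.mul_add_div hm, Nat.div_eq_of_lt hrm, add_zero]
    have hr : n % m = r := by
      rw [key, Nat.mul_add_mod, Nat.mod_eq_of_lt hrm]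
    have hE : (t * k + q) * s + s' = T * (k * d + a) + b := by
      have h1' : (t * k + q) * s + s' = k * (t * s) + (q * s + s') := by ring
      rw [h1', hds, hab]
      ring
    have hi₀ : i₀ ∈ Finset.Icc 1 F := Finset.mem_Icc.mpr ⟨h1, h2⟩
    have hQ1 : shuffled F m c P n = P i₀ (T * (k * d + a) + b) *
        ∏ i ∈ (Finset.Icc 1 F).erase i₀,
          P i ((n / m) * sCount c i m + sCount c i (n % m)) := by
      unfold shuffled
      rw [← Finset.mul_prod_erase _ _ hi₀]
      congr 1
      rw [hq, hr, ← hs', ← hs'', hE]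
    have hQ2 : shuffled F m c P (n + 1) = P i₀ (T * (k * d + a) + b + 1) *
        ∏ i ∈ (Finset.Icc 1 F).erase i₀,
          P i ((n / m) * sCount c i m + sCount c i (n % m)) := by
      unfold shuffled
      rw [← Finset.mul_prod_erase _ _ hi₀]
      congr 1
      · rw [Estep c m hm n i₀, hq, hr, ← hs', ← hs'']
        rw [if_pos rfl, hE]
      · apply Finset.prod_congr rfl
        intro i hi
        congr 1
        rw [Estep c m hm n i]
        have hne : c (n % m) ≠ i := by
          rw [hr, ← hi₀']
          exact fun h => (Finset.ne_of_mem_erase hi) h.symm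
        rw [if_neg hne, add_zero]
    have hC := hcomp i₀ h1 h2 (k * d + a) b hb
    have hIcc : Finset.Icc (-(0 : ℤ)) (1 : ℤ) = {0, 1} := by decide
    rw [← hT'] at hC
    rw [hIcc] at hC ⊢
    rw [Finset.sum_pair (by norm_num : (0 : ℤ) ≠ 1)] at hC ⊢
    show X * shuffled F m c P n = _
    rw [hQ1, ← mul_assoc, hC]
    rw [zext_natCast, zext_natCast_one, zext_natCast, zext_natCast_one]
    rw [add_mul, smul_mul_assoc, smul_mul_assoc, ← hQ1, ← hQ2]
    have harg : ∀ p : Polynomial K,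
        ((p.comp (C (d : K) * X + C (a : K))).eval (k : K))
        = p.eval (((k * d + a : ℕ)) : K) := by
      intro p
      rw [eval_comp]
      congr 1
      simp only [eval_add, eval_mul, eval_C, eval_X]
      push_cast
      ring
    rw [harg, harg, harg, harg]
end

section
/- The sequence y : ℕ → ℚ defined by y_n = Σ_{k=0}^{n} binom(n,k)² · binom(n+k,k) satisfies Apéry's ζ(2)-recurrence: (n+2)²·y_{n+2} − (11n² + 33n + 25)·y_{n+1} − (n+1)²·y_n = 0 for all n ∈ ℕ. -/
open Finset

/-- Apéry's ζ(2)-sequence: `y_n = ∑_{k=0}^{n} binom(n,k)² · binom(n+k,k)`. -/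
def aperyZeta2 (n : ℕ) : ℚ :=
  ∑ k ∈ Finset.range (n + 1), ((n.choose k : ℚ)) ^ 2 * (((n + k).choose k : ℚ))

private lemma choose_cast_mul_succ (m k : ℕ) :
    ((m.choose k : ℚ)) * ((m : ℚ) + 1) = (((m + 1).choose k : ℚ)) * ((m : ℚ) + 1 - k) := by
  rcases le_or_gt k (m + 1) with h | h
  · have h0 := congrArg (Nat.cast : ℕ → ℚ) (Nat.choose_mul_succ_eq m k)
    push_cast [Nat.cast_sub h] at h0
    linarith
  · rw [Nat.choose_eq_zero_of_lt (by omega), Nat.choose_eq_zero_of_lt h]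
    simp

private lemma choose_succ_cast (m k : ℕ) :
    ((m.choose (k + 1) : ℚ)) * ((k : ℚ) + 1) = ((m.choose k : ℚ)) * ((m : ℚ) - k) := by
  rcases le_or_gt k m with h | h
  · have h0 := congrArg (Nat.cast : ℕ → ℚ) (Nat.choose_succ_right_eq m k)
    push_cast [Nat.cast_sub h] at h0
    linarith
  · rw [Nat.choose_eq_zero_of_lt h, Nat.choose_eq_zero_of_lt (by omega)]
    simp

/-- The Zeilberger certificate for Apéry's ζ(2)-recurrence. -/
private def aperyG (n k : ℕ) : ℚ :=
  (k : ℚ) ^ 3 * (((n + 2).choose k : ℚ)) ^ 2 * (((n + k).choose k : ℚ)) *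
    ((k : ℚ) ^ 2 + 7 * k - 30 + (n : ℚ) * ((k : ℚ) ^ 2 + 13 * k - 67)
      + (n : ℚ) ^ 2 * (6 * k - 48) - 11 * (n : ℚ) ^ 3)

private lemma apery_key (n k : ℕ) :
    ((n : ℚ) + 1) ^ 2 * ((n : ℚ) + 2) ^ 2 *
      (((n : ℚ) + 2) ^ 2 * ((((n + 2).choose k : ℚ)) ^ 2 * (((n + 2 + k).choose k : ℚ)))
        - (11 * (n : ℚ) ^ 2 + 33 * n + 25) *
            ((((n + 1).choose k : ℚ)) ^ 2 * (((n + 1 + k).choose k : ℚ)))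
        - ((n : ℚ) + 1) ^ 2 * (((n.choose k : ℚ)) ^ 2 * (((n + k).choose k : ℚ))))
      = aperyG n (k + 1) - aperyG n k := by
  have hn1 : ((n : ℚ) + 1) ≠ 0 := by positivity
  have hn2 : ((n : ℚ) + 2) ≠ 0 := by positivity
  have hk1 : ((k : ℚ) + 1) ≠ 0 := by positivity
  -- relations
  have h2 := choose_cast_mul_succ (n + 1) k
  have h1 := choose_cast_mul_succ n k
  have hB1 := choose_cast_mul_succ (n + k) k
  have hB2 := choose_cast_mul_succ (n + 1 + k) k
  have hA' := choose_succ_cast (n + 2) k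
  have hB' := choose_succ_cast (n + k + 1) k
  simp only [show n + 1 + 1 = n + 2 by omega, show n + k + 1 = n + 1 + k by omega,
    show n + 1 + k + 1 = n + 2 + k by omega] at h2 hB1 hB2 hB'
  push_cast at h2 h1 hB1 hB2 hA' hB'
  -- solved forms
  have e2 : (((n + 1).choose k : ℚ)) = ((n + 2).choose k : ℚ) * ((n : ℚ) + 2 - k) / ((n : ℚ) + 2) := by
    field_simp
    linarith
  have e1 : ((n.choose k : ℚ)) =
      ((n + 2).choose k : ℚ) * ((n : ℚ) + 2 - k) * ((n : ℚ) + 1 - k) / (((n : ℚ) + 1) * ((n : ℚ) + 2)) := by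
    rw [e2] at h1
    field_simp at h1 ⊢
    linarith
  have eB1 : (((n + 1 + k).choose k : ℚ)) = ((n + k).choose k : ℚ) * ((n : ℚ) + k + 1) / ((n : ℚ) + 1) := by
    field_simp
    linarith
  have eB2 : (((n + 2 + k).choose k : ℚ)) =
      ((n + k).choose k : ℚ) * ((n : ℚ) + k + 1) * ((n : ℚ) + k + 2) / (((n : ℚ) + 1) * ((n : ℚ) + 2)) := by
    rw [eB1] at hB2
    field_simp at hB2 ⊢
    linarith
  have eA' : (((n + 2).choose (k + 1) : ℚ)) = ((n + 2).choose k : ℚ) * ((n : ℚ) + 2 - k) / ((k : ℚ) + 1) := by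
    field_simp
    linarith
  have eB' : (((n + 1 + k).choose (k + 1) : ℚ)) =
      ((n + k).choose k : ℚ) * ((n : ℚ) + k + 1) / ((k : ℚ) + 1) := by
    rw [eB1] at hB'
    field_simp at hB' ⊢
    apply mul_right_cancel₀ hn1
    linear_combination hB'
  rw [aperyG, aperyG]
  simp only [show n + (k + 1) = n + 1 + k by omega]
  rw [e2, e1, eB1, eB2, eA', eB']
  push_cast
  field_simp
  ring

/-- Apéry's ζ(2)-sequence satisfies Apéry's ζ(2)-recurrence:
`(n+2)² y_{n+2} − (11n² + 33n + 25) y_{n+1} − (n+1)² y_n = 0` for all `n ∈ ℕ`. -/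
theorem aperyZeta2_recurrence (n : ℕ) :
    ((n : ℚ) + 2) ^ 2 * aperyZeta2 (n + 2) -
      (11 * (n : ℚ) ^ 2 + 33 * (n : ℚ) + 25) * aperyZeta2 (n + 1) -
      ((n : ℚ) + 1) ^ 2 * aperyZeta2 n = 0 := by
  have hc : (((n : ℚ) + 1) ^ 2 * ((n : ℚ) + 2) ^ 2) ≠ 0 := by positivity
  have hs2 : aperyZeta2 (n + 2) =
      ∑ k ∈ Finset.range (n + 3), (((n + 2).choose k : ℚ)) ^ 2 * (((n + 2 + k).choose k : ℚ)) := rfl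
  have hs1 : aperyZeta2 (n + 1) =
      ∑ k ∈ Finset.range (n + 3), (((n + 1).choose k : ℚ)) ^ 2 * (((n + 1 + k).choose k : ℚ)) := by
    rw [aperyZeta2, Finset.sum_range_succ (n := n + 2),
      Nat.choose_eq_zero_of_lt (by omega : n + 1 < n + 2)]
    push_cast
    ring
  have hs0 : aperyZeta2 n =
      ∑ k ∈ Finset.range (n + 3), ((n.choose k : ℚ)) ^ 2 * (((n + k).choose k : ℚ)) := by
    rw [aperyZeta2, Finset.sum_range_succ (n := n + 2), Finset.sum_range_succ (n := n + 1),
      Nat.choose_eq_zero_of_lt (by omega : n < n + 2),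
      Nat.choose_eq_zero_of_lt (by omega : n < n + 1)]
    push_cast
    ring
  have main : ((n : ℚ) + 1) ^ 2 * ((n : ℚ) + 2) ^ 2 *
      (((n : ℚ) + 2) ^ 2 * aperyZeta2 (n + 2) -
        (11 * (n : ℚ) ^ 2 + 33 * (n : ℚ) + 25) * aperyZeta2 (n + 1) -
        ((n : ℚ) + 1) ^ 2 * aperyZeta2 n) = 0 := by
    rw [hs2, hs1, hs0, Finset.mul_sum, Finset.mul_sum, Finset.mul_sum,
      ← Finset.sum_sub_distrib, ← Finset.sum_sub_distrib, Finset.mul_sum]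
    have htel : ∑ k ∈ Finset.range (n + 3), (aperyG n (k + 1) - aperyG n k)
        = aperyG n (n + 3) - aperyG n 0 := Finset.sum_range_sub (aperyG n) (n + 3)
    have h0 : aperyG n 0 = 0 := by simp [aperyG]
    have h3 : aperyG n (n + 3) = 0 := by
      rw [aperyG, Nat.choose_eq_zero_of_lt (by omega : n + 2 < n + 3)]
      push_cast
      ring
    calc (∑ k ∈ Finset.range (n + 3), ((n : ℚ) + 1) ^ 2 * ((n : ℚ) + 2) ^ 2 *
            (((n : ℚ) + 2) ^ 2 * (((n + 2).choose k : ℚ) ^ 2 * ((n + 2 + k).choose k : ℚ)) -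
              (11 * (n : ℚ) ^ 2 + 33 * (n : ℚ) + 25) *
                (((n + 1).choose k : ℚ) ^ 2 * ((n + 1 + k).choose k : ℚ)) -
              ((n : ℚ) + 1) ^ 2 * ((n.choose k : ℚ) ^ 2 * ((n + k).choose k : ℚ))))
        = ∑ k ∈ Finset.range (n + 3), (aperyG n (k + 1) - aperyG n k) := by
          refine Finset.sum_congr rfl fun k _ => ?_
          linear_combination apery_key n k
      _ = 0 := by rw [htel, h0, h3]; ring
  rcases mul_eq_zero.mp main with h | h
  · exact absurd h hc
  · exact h
end
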